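/- For 0 < q, μ, y < 1, set η_m = (y;q)_m/(μy;q)_m for m ∈ ℤ_{≥0} ∪ {∞} (with η_∞ = (y;q)_∞/(μy;q)_∞). Then 1 = η_0 > η_1 > η_2 > ··· ≥ η_∞ > 0, and for every n ≥ 0, lim_{L→∞} ∑_{m ≥ 0} q^{mn}(η_m^L − δ_{n,0} η_∞^L) = 1. -/

import Mathlib

noncomputable def qPoch (z q : ℝ) (m : ℕ) : ℝ := ∏ j ∈ Finset.range m, (1 - z * q ^ j)

noncomputable def qPochInf (z q : ℝ) : ℝ := ∏' j : ℕ, (1 - z * q ^ j)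

noncomputable def eta (q μ y : ℝ) (m : ℕ) : ℝ := qPoch y q m / qPoch (μ * y) q m

noncomputable def etaInf (q μ y : ℝ) : ℝ := qPochInf y q / qPochInf (μ * y) q

open Filter Finset Real


lemma factor_pos' {q z : ℝ} (hq0 : 0 < q) (hq1 : q < 1) (hz0 : 0 < z) (hz1 : z < 1) (j : ℕ) :
    0 < 1 - z * q ^ j := by
  have h1 : q ^ j ≤ 1 := pow_le_one₀ hq0.le hq1.le
  nlinarith [pow_pos hq0 j]

lemma summable_neg_log' {q z : ℝ} (hq0 : 0 < q) (hq1 : q < 1) (hz0 : 0 < z) (hz1 : z < 1) :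
    Summable fun j : ℕ => -Real.log (1 - z * q ^ j) := by
  have hpos := factor_pos' hq0 hq1 hz0 hz1
  refine Summable.of_nonneg_of_le (fun j => ?_) (fun j => ?_)
    (((summable_geometric_of_lt_one hq0.le hq1).mul_left (z / (1 - z))))
  · have : 1 - z * q ^ j ≤ 1 := by nlinarith [pow_pos hq0 j]
    simpa using Real.log_nonpos (by linarith [hpos j]) this
  · have h1 : Real.log (1 - z * q ^ j)⁻¹ ≤ (1 - z * q ^ j)⁻¹ - 1 :=
      Real.log_le_sub_one_of_pos (inv_pos.2 (hpos j))
    rw [Real.log_inv] at h1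
    have h2 : (1 - z * q ^ j)⁻¹ - 1 ≤ z / (1 - z) * q ^ j := by
      have hz' : 0 < 1 - z := by linarith
      have hd : 1 - z ≤ 1 - z * q ^ j := by nlinarith [pow_le_one₀ (n := j) hq0.le hq1.le, pow_pos hq0 j]
      have hi : (1 - z * q ^ j)⁻¹ * (1 - z * q ^ j) = 1 := inv_mul_cancel₀ (ne_of_gt (hpos j))
      rw [div_mul_eq_mul_div, le_div_iff₀ hz']
      nlinarith [hi, hd, inv_pos.2 (hpos j), mul_pos hz0 (pow_pos hq0 j)]
    linarith

lemma hasProd_poch' {q z : ℝ} (hq0 : 0 < q) (hq1 : q < 1) (hz0 : 0 < z) (hz1 : z < 1) :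
    HasProd (fun j : ℕ => 1 - z * q ^ j)
      (Real.exp (∑' j : ℕ, Real.log (1 - z * q ^ j))) := by
  have hs : Summable fun j : ℕ => Real.log (1 - z * q ^ j) := by
    simpa using (summable_neg_log' hq0 hq1 hz0 hz1).neg
  have h := hs.hasSum.rexp
  have h2 : (rexp ∘ fun j : ℕ => Real.log (1 - z * q ^ j)) = fun j : ℕ => 1 - z * q ^ j :=
    funext fun j => Real.exp_log (factor_pos' hq0 hq1 hz0 hz1 j)
  rwa [h2] at h


lemma one_sub_sum_le_prod' (a : ℕ → ℝ) (h0 : ∀ i, 0 ≤ a i) (h1 : ∀ i, a i ≤ 1) (k : ℕ) :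
    1 - ∑ i ∈ Finset.range k, a i ≤ ∏ i ∈ Finset.range k, (1 - a i) := by
  induction k with
  | zero => simp
  | succ k ih =>
    rw [Finset.prod_range_succ, Finset.sum_range_succ]
    have hp : 0 ≤ ∏ i ∈ Finset.range k, (1 - a i) :=
      Finset.prod_nonneg fun i _ => by linarith [h1 i]
    have hs : 0 ≤ ∑ i ∈ Finset.range k, a i := Finset.sum_nonneg fun i _ => h0 i
    nlinarith [h0 k, h1 k, mul_le_mul_of_nonneg_right ih (by linarith [h1 k] : (0:ℝ) ≤ 1 - a k)]

lemma pow_sub_pow_le' (a b c : ℝ) (hb : 0 ≤ b) (hba : b ≤ a) (hac : a ≤ c) (hc : c ≤ 1) :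
    ∀ L : ℕ, a ^ L - b ^ L ≤ L * c ^ (L - 1) * (a - b) := by
  intro L
  induction L with
  | zero => simp
  | succ L ih =>
    have ha : 0 ≤ a := hb.trans hba
    have hc0 : 0 ≤ c := ha.trans hac
    have hpbc : b ^ L ≤ c ^ L := pow_le_pow_left₀ hb (hba.trans hac) L
    have hab : 0 ≤ a ^ L - b ^ L := by linarith [pow_le_pow_left₀ hb hba L]
    have hcc : c * c ^ (L - 1) ≤ c ^ L := by
      cases L with
      | zero => simpa using hc
      | succ L => rw [Nat.add_sub_cancel, ← pow_succ']
    have hcnn : 0 ≤ c ^ (L - 1) := pow_nonneg hc0 _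
    have hih : a * (a ^ L - b ^ L) ≤ c * (L * c ^ (L - 1) * (a - b)) := by
      calc a * (a ^ L - b ^ L) ≤ c * (a ^ L - b ^ L) := mul_le_mul_of_nonneg_right hac hab
        _ ≤ c * (L * c ^ (L - 1) * (a - b)) := mul_le_mul_of_nonneg_left ih hc0
    have hbl : (a - b) * b ^ L ≤ (a - b) * c ^ L :=
      mul_le_mul_of_nonneg_left hpbc (by linarith)
    have key : a ^ (L + 1) - b ^ (L + 1) = a * (a ^ L - b ^ L) + (a - b) * b ^ L := by ring
    have hc2 : c * (L * c ^ (L - 1) * (a - b)) ≤ L * c ^ L * (a - b) := by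
      have : c * (L * c ^ (L - 1) * (a - b)) = (L * (a - b)) * (c * c ^ (L - 1)) := by ring
      rw [this]
      have hL : 0 ≤ (L : ℝ) * (a - b) := mul_nonneg (Nat.cast_nonneg L) (by linarith)
      nlinarith [mul_le_mul_of_nonneg_left hcc hL]
    have : a ^ (L + 1) - b ^ (L + 1) ≤ L * c ^ L * (a - b) + (a - b) * c ^ L := by
      rw [key]; exact add_le_add (hih.trans hc2) hbl
    calc a ^ (L + 1) - b ^ (L + 1) ≤ L * c ^ L * (a - b) + (a - b) * c ^ L := this
      _ = (L + 1 : ℕ) * c ^ ((L + 1) - 1) * (a - b) := by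
          rw [Nat.add_sub_cancel]; push_cast; ring

set_option maxHeartbeats 2000000 in
theorem eta_monotone_and_limit (q μ y : ℝ)
    (hq0 : 0 < q) (hq1 : q < 1) (hμ0 : 0 < μ) (hμ1 : μ < 1) (hy0 : 0 < y) (hy1 : y < 1) :
    eta q μ y 0 = 1 ∧
    (∀ m : ℕ, eta q μ y (m + 1) < eta q μ y m) ∧
    (∀ m : ℕ, etaInf q μ y ≤ eta q μ y m) ∧
    0 < etaInf q μ y ∧
    ∀ n : ℕ,
      Filter.Tendsto
        (fun L : ℕ => ∑' m : ℕ,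
          q ^ (m * n) * ((eta q μ y m) ^ L - (if n = 0 then (etaInf q μ y) ^ L else 0)))
        Filter.atTop (nhds 1) := by
  have hq1' : 0 < 1 - q := by linarith
  have hμy0 : 0 < μ * y := mul_pos hμ0 hy0
  have hμy1 : μ * y < 1 := by nlinarith
  have hgpos : ∀ j : ℕ, 0 < 1 - y * q ^ j := factor_pos' hq0 hq1 hy0 hy1
  have hhpos : ∀ j : ℕ, 0 < 1 - μ * y * q ^ j := factor_pos' hq0 hq1 hμy0 hμy1
  set r : ℕ → ℝ := fun j => (1 - y * q ^ j) / (1 - μ * y * q ^ j) with hrdef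
  have hrpos : ∀ j, 0 < r j := fun j => div_pos (hgpos j) (hhpos j)
  have hrlt : ∀ j, r j < 1 := fun j => by
    rw [hrdef, div_lt_one (hhpos j)]
    nlinarith [mul_pos (mul_pos (by linarith : (0:ℝ) < 1 - μ) hy0) (pow_pos hq0 j)]
  have hrge : ∀ j, 1 - y * q ^ j ≤ r j := fun j => by
    rw [hrdef, le_div_iff₀ (hhpos j)]
    nlinarith [pow_pos hq0 j, hgpos j, mul_pos hμy0 (pow_pos hq0 j)]
  have heta : ∀ m, eta q μ y m = ∏ j ∈ Finset.range m, r j := by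
    intro m
    rw [eta, qPoch, qPoch, ← Finset.prod_div_distrib]
  have hetapos : ∀ m, 0 < eta q μ y m := fun m => by
    rw [heta]; exact Finset.prod_pos fun j _ => hrpos j
  have heta1 : ∀ m, eta q μ y m ≤ 1 := fun m => by
    rw [heta]
    exact Finset.prod_le_one (fun j _ => (hrpos j).le) (fun j _ => (hrlt j).le)
  have heta0 : eta q μ y 0 = 1 := by rw [heta]; simp
  have hdec : ∀ m, eta q μ y (m + 1) < eta q μ y m := by
    intro m
    rw [heta, heta, Finset.prod_range_succ]
    have := Finset.prod_pos (fun j (_ : j ∈ Finset.range m) => hrpos j)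
    nlinarith [hrlt m, hrpos m]
  -- HasProd r (etaInf)
  have hgHP := hasProd_poch' hq0 hq1 hy0 hy1
  have hhHP := hasProd_poch' hq0 hq1 hμy0 hμy1
  have hgS : Summable fun j : ℕ => Real.log (1 - y * q ^ j) := by
    simpa using (summable_neg_log' hq0 hq1 hy0 hy1).neg
  have hhS : Summable fun j : ℕ => Real.log (1 - μ * y * q ^ j) := by
    simpa using (summable_neg_log' hq0 hq1 hμy0 hμy1).neg
  have hEIeq : etaInf q μ y =
      Real.exp ((∑' j : ℕ, Real.log (1 - y * q ^ j)) - ∑' j : ℕ, Real.log (1 - μ * y * q ^ j)) := by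
    rw [etaInf, qPochInf, qPochInf, hgHP.tprod_eq, hhHP.tprod_eq, Real.exp_sub]
  have hEIpos : 0 < etaInf q μ y := by rw [hEIeq]; exact Real.exp_pos _
  have hEIHP : HasProd r (etaInf q μ y) := by
    have hsum : HasSum (fun j : ℕ => Real.log (1 - y * q ^ j) - Real.log (1 - μ * y * q ^ j))
        ((∑' j : ℕ, Real.log (1 - y * q ^ j)) - ∑' j : ℕ, Real.log (1 - μ * y * q ^ j)) :=
      hgS.hasSum.sub hhS.hasSum
    have h := hsum.rexp
    have h2 : (rexp ∘ fun j : ℕ => Real.log (1 - y * q ^ j) - Real.log (1 - μ * y * q ^ j)) = r := by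
      funext j
      simp only [Function.comp_apply, Real.exp_sub, Real.exp_log (hgpos j), Real.exp_log (hhpos j), hrdef]
    rw [h2, ← hEIeq] at h
    exact h
  have htend : Tendsto (fun m => eta q μ y m) atTop (nhds (etaInf q μ y)) := by
    have := hEIHP.tendsto_prod_nat
    refine this.congr fun m => ?_
    rw [heta]
  have hanti : Antitone (eta q μ y) := antitone_nat_of_succ_le fun m => (hdec m).le
  have hle : ∀ m, etaInf q μ y ≤ eta q μ y m := fun m =>
    le_of_tendsto htend (eventually_atTop.2 ⟨m, fun k hk => hanti hk⟩)
  have hqs : Summable fun i : ℕ => q ^ i := summable_geometric_of_lt_one hq0.le hq1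
  have hlrS : Summable fun j : ℕ => Real.log (r j) := by
    refine (hgS.sub hhS).congr fun j => ?_
    rw [hrdef]
    exact (Real.log_div (ne_of_gt (hgpos j)) (ne_of_gt (hhpos j))).symm
  have hEItsum : etaInf q μ y = Real.exp (∑' j : ℕ, Real.log (r j)) := by
    rw [hEIeq]
    congr 1
    refine (Summable.tsum_sub hgS hhS).symm.trans ?_
    exact tsum_congr fun j => (Real.log_div (ne_of_gt (hgpos j)) (ne_of_gt (hhpos j))).symm
  have hdecay : ∀ m, eta q μ y m - etaInf q μ y ≤ y / (1 - q) * q ^ m := by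
    intro m
    have hlrS' : Summable fun i : ℕ => Real.log (r (i + m)) :=
      (summable_nat_add_iff m).2 hlrS
    set T := Real.exp (∑' i : ℕ, Real.log (r (i + m))) with hTdef
    have hTHP : HasProd (fun i : ℕ => r (i + m)) T := by
      have h := hlrS'.hasSum.rexp
      have h2 : (rexp ∘ fun i : ℕ => Real.log (r (i + m))) = fun i : ℕ => r (i + m) :=
        funext fun i => Real.exp_log (hrpos (i + m))
      rwa [h2] at h
    have hsplit : eta q μ y m * T = etaInf q μ y := by
      rw [hEItsum, ← Summable.sum_add_tsum_nat_add m hlrS, Real.exp_add, hTdef, heta]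
      congr 1
      rw [Real.exp_sum]
      exact (Finset.prod_congr rfl fun j _ => Real.exp_log (hrpos j)).symm
    have hTlb : 1 - y / (1 - q) * q ^ m ≤ T := by
      refine ge_of_tendsto hTHP.tendsto_prod_nat (Eventually.of_forall fun k => ?_)
      have h1 : ∏ i ∈ Finset.range k, (1 - y * q ^ (i + m)) ≤ ∏ i ∈ Finset.range k, r (i + m) :=
        Finset.prod_le_prod (fun i _ => (hgpos (i + m)).le) (fun i _ => hrge (i + m))
      have h2 : 1 - ∑ i ∈ Finset.range k, y * q ^ (i + m) ≤
          ∏ i ∈ Finset.range k, (1 - y * q ^ (i + m)) :=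
        one_sub_sum_le_prod' _ (fun i => by positivity)
          (fun i => by nlinarith [pow_le_one₀ (n := i + m) hq0.le hq1.le, pow_pos hq0 (i + m)]) k
      have h3 : ∑ i ∈ Finset.range k, y * q ^ (i + m) ≤ y / (1 - q) * q ^ m := by
        have heq : (fun i : ℕ => y * q ^ (i + m)) = fun i : ℕ => (y * q ^ m) * q ^ i := by
          funext i; rw [pow_add]; ring
        rw [heq]
        calc ∑ i ∈ Finset.range k, (y * q ^ m) * q ^ i
            ≤ ∑' i : ℕ, (y * q ^ m) * q ^ i :=
              Summable.sum_le_tsum _ (fun i _ => by positivity) (hqs.mul_left _)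
          _ = (y * q ^ m) * (1 - q)⁻¹ := by
              rw [tsum_mul_left, tsum_geometric_of_lt_one hq0.le hq1]
          _ = y / (1 - q) * q ^ m := by field_simp
      linarith
    have hCnn : 0 ≤ y / (1 - q) * q ^ m := by positivity
    nlinarith [heta1 m, (hetapos m).le, hTlb, hsplit,
      mul_le_mul_of_nonneg_left hTlb (hetapos m).le,
      mul_nonneg (sub_nonneg.2 (heta1 m)) hCnn]
  refine ⟨heta0, hdec, hle, hEIpos, ?_⟩
  have hE1lt : eta q μ y 1 < 1 := heta0 ▸ hdec 0
  have hE1pos : 0 < eta q μ y 1 := hetapos 1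
  have hEIlt1 : etaInf q μ y < 1 := lt_of_le_of_lt (hle 1) hE1lt
  have hE1norm : ‖eta q μ y 1‖ < 1 := by
    rw [Real.norm_eq_abs, abs_of_pos hE1pos]; exact hE1lt
  have hB : Tendsto (fun L : ℕ => (L : ℝ) * eta q μ y 1 ^ (L - 1)) atTop (nhds 0) := by
    have hs1 : Summable fun n : ℕ => ((n : ℝ) + 1) * eta q μ y 1 ^ n := by
      have hs1a := summable_pow_mul_geometric_of_norm_lt_one 1 hE1norm
      have hs1b : Summable fun n : ℕ => eta q μ y 1 ^ n :=
        summable_geometric_of_lt_one hE1pos.le hE1lt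
      refine (hs1a.add hs1b).congr fun n => ?_
      push_cast; ring
    have h1 : Tendsto (fun n : ℕ => ((n : ℝ) + 1) * eta q μ y 1 ^ n) atTop (nhds 0) :=
      hs1.tendsto_atTop_zero
    have h2 := h1.comp (tendsto_sub_atTop_nat 1)
    refine h2.congr' ?_
    filter_upwards [eventually_ge_atTop 1] with L hL
    simp only [Function.comp_apply]
    congr 1
    rw [Nat.cast_sub hL]
    push_cast
    ring
  intro n
  rcases eq_or_ne n 0 with hn | hn
  · -- n = 0 case
    subst hn
    simp only [Nat.mul_zero, pow_zero, one_mul, reduceIte]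
    set E := eta q μ y
    set EI := etaInf q μ y
    have hterm_nonneg : ∀ (L m : ℕ), 0 ≤ E m ^ L - EI ^ L := fun L m =>
      sub_nonneg.2 (pow_le_pow_left₀ hEIpos.le (hle m) L)
    have hterm_le : ∀ (L m : ℕ), E m ^ L - EI ^ L ≤ ((L : ℝ) * (y / (1 - q))) * q ^ m := by
      intro L m
      have h := pow_sub_pow_le' (E m) EI 1 hEIpos.le (hle m) (heta1 m) le_rfl L
      rw [one_pow, mul_one] at h
      calc E m ^ L - EI ^ L ≤ (L : ℝ) * (E m - EI) := h
        _ ≤ (L : ℝ) * (y / (1 - q) * q ^ m) :=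
            mul_le_mul_of_nonneg_left (hdecay m) (Nat.cast_nonneg L)
        _ = ((L : ℝ) * (y / (1 - q))) * q ^ m := by ring
    have hS : ∀ L : ℕ, Summable fun m : ℕ => E m ^ L - EI ^ L := fun L =>
      Summable.of_nonneg_of_le (hterm_nonneg L) (hterm_le L) (hqs.mul_left _)
    have hsplit : (fun L : ℕ => ∑' m : ℕ, (E m ^ L - EI ^ L)) =
        fun L : ℕ => (1 - EI ^ L) + ∑' m : ℕ, (E (m + 1) ^ L - EI ^ L) := by
      funext L
      rw [Summable.tsum_eq_zero_add (hS L)]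
      have : E 0 = 1 := heta0
      rw [this, one_pow]
    rw [hsplit]
    have hHead : Tendsto (fun L : ℕ => 1 - EI ^ L) atTop (nhds 1) := by
      have h0 := tendsto_pow_atTop_nhds_zero_of_lt_one hEIpos.le hEIlt1
      simpa using h0.const_sub 1
    have hTail : Tendsto (fun L : ℕ => ∑' m : ℕ, (E (m + 1) ^ L - EI ^ L)) atTop (nhds 0) := by
      set K := y / (1 - q) * q * (1 - q)⁻¹ with hK
      have hKnn : 0 ≤ K := by
        rw [hK]
        exact mul_nonneg (mul_nonneg (div_nonneg hy0.le hq1'.le) hq0.le) (inv_nonneg.2 hq1'.le)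
      have htail_le : ∀ L : ℕ, ∑' m : ℕ, (E (m + 1) ^ L - EI ^ L) ≤
          ((L : ℝ) * E 1 ^ (L - 1)) * K := by
        intro L
        have hbnd : ∀ m : ℕ, E (m + 1) ^ L - EI ^ L ≤
            ((L : ℝ) * E 1 ^ (L - 1) * (y / (1 - q) * q)) * q ^ m := by
          intro m
          have hE1le1 : E 1 ≤ 1 := heta1 1
          have hEm1 : E (m + 1) ≤ E 1 := hanti (Nat.succ_le_succ (Nat.zero_le m))
          have h := pow_sub_pow_le' (E (m + 1)) EI (E 1) hEIpos.le (hle (m + 1)) hEm1 hE1le1 L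
          have h2 : E (m + 1) - EI ≤ y / (1 - q) * q ^ (m + 1) := hdecay (m + 1)
          have hLc : 0 ≤ (L : ℝ) * E 1 ^ (L - 1) :=
            mul_nonneg (Nat.cast_nonneg L) (pow_nonneg hE1pos.le _)
          calc E (m + 1) ^ L - EI ^ L ≤ (L : ℝ) * E 1 ^ (L - 1) * (E (m + 1) - EI) := h
            _ ≤ (L : ℝ) * E 1 ^ (L - 1) * (y / (1 - q) * q ^ (m + 1)) :=
                mul_le_mul_of_nonneg_left h2 hLc
            _ = ((L : ℝ) * E 1 ^ (L - 1) * (y / (1 - q) * q)) * q ^ m := by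
                rw [pow_succ]; ring
        calc ∑' m : ℕ, (E (m + 1) ^ L - EI ^ L)
            ≤ ∑' m : ℕ, ((L : ℝ) * E 1 ^ (L - 1) * (y / (1 - q) * q)) * q ^ m := by
              refine Summable.tsum_le_tsum hbnd ?_ (hqs.mul_left _)
              exact ((hS L).comp_injective (add_left_injective 1)).congr fun m => rfl
          _ = ((L : ℝ) * E 1 ^ (L - 1) * (y / (1 - q) * q)) * (1 - q)⁻¹ := by
              rw [tsum_mul_left, tsum_geometric_of_lt_one hq0.le hq1]
          _ = ((L : ℝ) * E 1 ^ (L - 1)) * K := by rw [hK]; ring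
      have htail_nn : ∀ L : ℕ, 0 ≤ ∑' m : ℕ, (E (m + 1) ^ L - EI ^ L) := fun L =>
        tsum_nonneg fun m => hterm_nonneg L (m + 1)
      have hBK : Tendsto (fun L : ℕ => ((L : ℝ) * E 1 ^ (L - 1)) * K) atTop (nhds 0) := by
        simpa using hB.mul_const K
      exact tendsto_of_tendsto_of_tendsto_of_le_of_le tendsto_const_nhds hBK htail_nn htail_le
    simpa using hHead.add hTail
  · -- n ≥ 1 case
    simp only [if_neg hn, sub_zero]
    have hn1 : 1 ≤ n := Nat.one_le_iff_ne_zero.2 hn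
    set E := eta q μ y
    have hqmn : ∀ m : ℕ, q ^ (m * n) ≤ q ^ m := fun m =>
      pow_le_pow_of_le_one hq0.le hq1.le (Nat.le_mul_of_pos_right m (Nat.pos_of_ne_zero hn))
    have hterm_nonneg : ∀ (L m : ℕ), 0 ≤ q ^ (m * n) * E m ^ L := fun L m =>
      mul_nonneg (pow_nonneg hq0.le _) (pow_nonneg (hetapos m).le _)
    have hterm_le : ∀ (L m : ℕ), q ^ (m * n) * E m ^ L ≤ q ^ m := by
      intro L m
      have h1 : E m ^ L ≤ 1 := pow_le_one₀ (hetapos m).le (heta1 m)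
      have h2 : 0 < q ^ (m * n) := pow_pos hq0 _
      nlinarith [hqmn m]
    have hS : ∀ L : ℕ, Summable fun m : ℕ => q ^ (m * n) * E m ^ L := fun L =>
      Summable.of_nonneg_of_le (hterm_nonneg L) (hterm_le L) hqs
    have hsplit : (fun L : ℕ => ∑' m : ℕ, q ^ (m * n) * E m ^ L) =
        fun L : ℕ => 1 + ∑' m : ℕ, q ^ ((m + 1) * n) * E (m + 1) ^ L := by
      funext L
      rw [Summable.tsum_eq_zero_add (hS L)]
      have h0 : E 0 = 1 := heta0
      rw [Nat.zero_mul, pow_zero, h0, one_pow, mul_one]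
    rw [hsplit]
    have hTail : Tendsto (fun L : ℕ => ∑' m : ℕ, q ^ ((m + 1) * n) * E (m + 1) ^ L)
        atTop (nhds 0) := by
      have htail_le : ∀ L : ℕ, ∑' m : ℕ, q ^ ((m + 1) * n) * E (m + 1) ^ L ≤
          E 1 ^ L * (q * (1 - q)⁻¹) := by
        intro L
        have hbnd : ∀ m : ℕ, q ^ ((m + 1) * n) * E (m + 1) ^ L ≤ (E 1 ^ L * q) * q ^ m := by
          intro m
          have hEm1 : E (m + 1) ≤ E 1 := hanti (Nat.succ_le_succ (Nat.zero_le m))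
          have h1 : E (m + 1) ^ L ≤ E 1 ^ L := pow_le_pow_left₀ (hetapos (m + 1)).le hEm1 L
          have h2 : q ^ ((m + 1) * n) ≤ q ^ (m + 1) := hqmn (m + 1)
          have h3 : 0 < q ^ ((m + 1) * n) := pow_pos hq0 _
          have h4 : 0 ≤ E (m + 1) ^ L := pow_nonneg (hetapos (m + 1)).le L
          calc q ^ ((m + 1) * n) * E (m + 1) ^ L ≤ q ^ (m + 1) * E 1 ^ L := by
                have h5 : 0 < q ^ (m + 1) := pow_pos hq0 _
                nlinarith [pow_nonneg hE1pos.le L]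
            _ = (E 1 ^ L * q) * q ^ m := by rw [pow_succ]; ring
        calc ∑' m : ℕ, q ^ ((m + 1) * n) * E (m + 1) ^ L
            ≤ ∑' m : ℕ, (E 1 ^ L * q) * q ^ m := by
              refine Summable.tsum_le_tsum hbnd ?_ (hqs.mul_left _)
              exact ((hS L).comp_injective (add_left_injective 1)).congr fun m => rfl
          _ = (E 1 ^ L * q) * (1 - q)⁻¹ := by
              rw [tsum_mul_left, tsum_geometric_of_lt_one hq0.le hq1]
          _ = E 1 ^ L * (q * (1 - q)⁻¹) := by ring
      have htail_nn : ∀ L : ℕ, 0 ≤ ∑' m : ℕ, q ^ ((m + 1) * n) * E (m + 1) ^ L := fun L =>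
        tsum_nonneg fun m => hterm_nonneg L (m + 1)
      have hBK : Tendsto (fun L : ℕ => E 1 ^ L * (q * (1 - q)⁻¹)) atTop (nhds 0) := by
        simpa using (tendsto_pow_atTop_nhds_zero_of_lt_one hE1pos.le hE1lt).mul_const
          (q * (1 - q)⁻¹)
      exact tendsto_of_tendsto_of_tendsto_of_le_of_le tendsto_const_nhds hBK htail_nn htail_le
    simpa using hTail.const_add 1
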